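/- Let D ≥ 1, σ > 0, and for each t ∈ [0,1] let p_t : ℝ^D → ℝ be a continuously differentiable strictly positive probability density. Let μ : ℝ^D × [0,1] → ℝ^D be continuous and set φ*(x,t) = −μ(x,t) + σ² ∇_x log p_t(x). Let φ : ℝ^D × [0,1] → ℝ^D be continuously differentiable and satisfy the same integrability and divergence-identity assumptions as φ* (namely, all integrands of the cost functional L are integrable and ∫_{ℝ^D} ( p_t(x) tr J_φ(x,t) + ⟪φ(x,t), ∇p_t(x)⟫ ) dx = 0 for a.e. t). If L[φ] = L[φ*], where L[φ] = ∫₀¹ ∫_{ℝ^D} p_t(x) ( ‖φ(x,t)‖² + 2 ⟪μ(x,t), φ(x,t)⟫ + 2 σ² tr J_φ(x,t) ) dx dt, then φ(x,t) = φ*(x,t) for (Lebesgue-)almost every (x,t) ∈ ℝ^D × [0,1]. -/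

import Mathlib

open MeasureTheory
open scoped RealInnerProductSpace


lemma grad_log_aux {E : Type*} [NormedAddCommGroup E] [InnerProductSpace ℝ E]
    [CompleteSpace E] {f : E → ℝ} {x : E}
    (hf : DifferentiableAt ℝ f x) (hx : f x ≠ 0) :
    gradient (fun y => Real.log (f y)) x = (f x)⁻¹ • gradient f x := by
  have h1 : HasFDerivAt (fun y => Real.log (f y)) ((f x)⁻¹ • fderiv ℝ f x) x :=
    (Real.hasDerivAt_log hx).comp_hasFDerivAt x hf.hasFDerivAt
  rw [gradient, h1.fderiv, _root_.map_smul, gradient]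

/-- The divergence (trace of the Jacobian) of a vector field `f : ℝ^D → ℝ^D`:
`tr J_f(x) = ∑ i ∂_i f_i(x)`. -/
noncomputable def divg {D : ℕ}
    (f : EuclideanSpace ℝ (Fin D) → EuclideanSpace ℝ (Fin D))
    (x : EuclideanSpace ℝ (Fin D)) : ℝ :=
  ∑ i, fderiv ℝ f x (EuclideanSpace.single i 1) i

/-- **Uniqueness of the minimizer of the score-matching cost functional.**
With `φ*(x,t) = -μ(x,t) + σ² ∇ₓ log p_t(x)`, under the same integrability and
divergence-identity assumptions as for `φ*`, if `L[φ] = L[φ*]` then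
`φ = φ*` Lebesgue-almost everywhere on `ℝ^D × [0,1]`. -/
theorem costFunctional_eq_implies_ae_eq
    (D : ℕ) (hD : 1 ≤ D) (σ : ℝ) (hσ : 0 < σ)
    (p : ℝ → EuclideanSpace ℝ (Fin D) → ℝ)
    (hp_diff : ∀ t ∈ Set.Icc (0:ℝ) 1, ContDiff ℝ 1 (p t))
    (hp_pos : ∀ t ∈ Set.Icc (0:ℝ) 1, ∀ x, 0 < p t x)
    (hp_prob : ∀ t ∈ Set.Icc (0:ℝ) 1, ∫ x, p t x = 1)
    (μ : EuclideanSpace ℝ (Fin D) → ℝ → EuclideanSpace ℝ (Fin D))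
    (hμ_cont : Continuous fun q : EuclideanSpace ℝ (Fin D) × ℝ => μ q.1 q.2)
    (φ φs : EuclideanSpace ℝ (Fin D) → ℝ → EuclideanSpace ℝ (Fin D))
    (hφs : ∀ x t, φs x t
      = -μ x t + σ ^ 2 • gradient (fun y => Real.log (p t y)) x)
    (hφ_diff : ContDiffOn ℝ 1 (fun q : EuclideanSpace ℝ (Fin D) × ℝ => φ q.1 q.2)
      (Set.univ ×ˢ Set.Icc (0:ℝ) 1))
    -- integrability in `x` of every integrand appearing in the cost functional,
    -- for both `φ` and `φ*`
    (hInt : ∀ f ∈ ({φ, φs} :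
        Set (EuclideanSpace ℝ (Fin D) → ℝ → EuclideanSpace ℝ (Fin D))),
      ∀ t ∈ Set.Icc (0:ℝ) 1,
        Integrable (fun x => p t x * ‖f x t‖ ^ 2) ∧
        Integrable (fun x => p t x * ⟪μ x t, f x t⟫) ∧
        Integrable (fun x => p t x * divg (fun y => f y t) x) ∧
        Integrable (fun x => ⟪f x t, gradient (p t) x⟫))
    -- integrability in `t` of the corresponding time integrands
    (hIntT : ∀ f ∈ ({φ, φs} :
        Set (EuclideanSpace ℝ (Fin D) → ℝ → EuclideanSpace ℝ (Fin D))),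
      IntegrableOn (fun t => ∫ x, p t x * ‖f x t‖ ^ 2) (Set.Icc (0:ℝ) 1) ∧
      IntegrableOn (fun t => ∫ x, p t x * ⟪μ x t, f x t⟫) (Set.Icc (0:ℝ) 1) ∧
      IntegrableOn (fun t => ∫ x, p t x * divg (fun y => f y t) x) (Set.Icc (0:ℝ) 1))
    -- the divergence identity, for a.e. `t ∈ [0,1]`, for both `φ` and `φ*`
    (hdiv : ∀ f ∈ ({φ, φs} :
        Set (EuclideanSpace ℝ (Fin D) → ℝ → EuclideanSpace ℝ (Fin D))),
      ∀ᵐ t ∂(volume.restrict (Set.Icc (0:ℝ) 1)),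
        ∫ x, (p t x * divg (fun y => f y t) x + ⟪f x t, gradient (p t) x⟫) = 0)
    -- equality of the two values of the cost functional
    (hL : ∫ t in Set.Icc (0:ℝ) 1, ∫ x,
        p t x * (‖φ x t‖ ^ 2 + 2 * ⟪μ x t, φ x t⟫
          + 2 * σ ^ 2 * divg (fun y => φ y t) x)
      = ∫ t in Set.Icc (0:ℝ) 1, ∫ x,
        p t x * (‖φs x t‖ ^ 2 + 2 * ⟪μ x t, φs x t⟫
          + 2 * σ ^ 2 * divg (fun y => φs y t) x)) :
    ∀ᵐ q ∂((volume : Measure (EuclideanSpace ℝ (Fin D))).prod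
        (volume.restrict (Set.Icc (0:ℝ) 1))),
      φ q.1 q.2 = φs q.1 q.2 := by
  have hmemφ : φ ∈ ({φ, φs} :
      Set (EuclideanSpace ℝ (Fin D) → ℝ → EuclideanSpace ℝ (Fin D))) := by simp
  have hmemφs : φs ∈ ({φ, φs} :
      Set (EuclideanSpace ℝ (Fin D) → ℝ → EuclideanSpace ℝ (Fin D))) := by simp
  -- the key pointwise identity `σ² ⟪v, ∇p⟫ = p ⟪v, φ* + μ⟫`
  have key : ∀ t ∈ Set.Icc (0:ℝ) 1, ∀ (x v : EuclideanSpace ℝ (Fin D)),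
      σ ^ 2 * ⟪v, gradient (p t) x⟫ = p t x * ⟪v, φs x t + μ x t⟫ := by
    intro t ht x v
    have hpd : DifferentiableAt ℝ (p t) x := ((hp_diff t ht).differentiable one_ne_zero) x
    have hpx : p t x ≠ 0 := (hp_pos t ht x).ne'
    have hgrad : p t x • (φs x t + μ x t) = σ ^ 2 • gradient (p t) x := by
      rw [hφs, grad_log_aux hpd hpx]
      rw [neg_add_cancel_comm, smul_smul, smul_smul]
      congr 1
      field_simp
    rw [← real_inner_smul_right, ← hgrad, real_inner_smul_right]
  -- pointwise expansion of the square
  have ptE : ∀ t ∈ Set.Icc (0:ℝ) 1, ∀ x : EuclideanSpace ℝ (Fin D),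
      p t x * ‖φ x t - φs x t‖ ^ 2
        = p t x * ‖φ x t‖ ^ 2 + 2 * (p t x * ⟪μ x t, φ x t⟫)
          - 2 * σ ^ 2 * ⟪φ x t, gradient (p t) x⟫ + p t x * ‖φs x t‖ ^ 2 := by
    intro t ht x
    have h1 := key t ht x (φ x t)
    rw [inner_add_right] at h1
    rw [@norm_sub_sq_real]
    linear_combination (2:ℝ) * h1 - 2 * p t x * real_inner_comm (φ x t) (μ x t)
  -- pointwise identity for φ*
  have ptS : ∀ t ∈ Set.Icc (0:ℝ) 1, ∀ x : EuclideanSpace ℝ (Fin D),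
      σ ^ 2 * ⟪φs x t, gradient (p t) x⟫
        = p t x * ‖φs x t‖ ^ 2 + p t x * ⟪μ x t, φs x t⟫ := by
    intro t ht x
    have h1 := key t ht x (φs x t)
    rw [inner_add_right, real_inner_self_eq_norm_sq] at h1
    linear_combination h1 - p t x * real_inner_comm (φs x t) (μ x t)
  have hIφ := hInt φ hmemφ
  have hIφs := hInt φs hmemφs
  have hTφ := hIntT φ hmemφ
  have hTφs := hIntT φs hmemφs
  -- integrability of the squared-difference slice integrand
  have hIntE : ∀ t ∈ Set.Icc (0:ℝ) 1,
      Integrable (fun x => p t x * ‖φ x t - φs x t‖ ^ 2) := by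
    intro t ht
    have : Integrable (fun x => p t x * ‖φ x t‖ ^ 2 + 2 * (p t x * ⟪μ x t, φ x t⟫)
        - 2 * σ ^ 2 * ⟪φ x t, gradient (p t) x⟫ + p t x * ‖φs x t‖ ^ 2) :=
      (((hIφ t ht).1.add ((hIφ t ht).2.1.const_mul 2)).sub
        ((hIφ t ht).2.2.2.const_mul (2 * σ ^ 2))).add (hIφs t ht).1
    exact this.congr (Filter.Eventually.of_forall fun x => (ptE t ht x).symm)
  -- the value of the squared-difference slice integral
  have hEval : ∀ t ∈ Set.Icc (0:ℝ) 1,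
      ∫ x, p t x * ‖φ x t - φs x t‖ ^ 2
        = (∫ x, p t x * ‖φ x t‖ ^ 2) + 2 * (∫ x, p t x * ⟪μ x t, φ x t⟫)
          - 2 * σ ^ 2 * (∫ x, ⟪φ x t, gradient (p t) x⟫)
          + ∫ x, p t x * ‖φs x t‖ ^ 2 := by
    intro t ht
    have e1 : ∫ x, (p t x * ‖φ x t‖ ^ 2 + 2 * (p t x * ⟪μ x t, φ x t⟫)
          - 2 * σ ^ 2 * ⟪φ x t, gradient (p t) x⟫ + p t x * ‖φs x t‖ ^ 2)
        = (∫ x, (p t x * ‖φ x t‖ ^ 2 + 2 * (p t x * ⟪μ x t, φ x t⟫)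
            - 2 * σ ^ 2 * ⟪φ x t, gradient (p t) x⟫))
          + ∫ x, p t x * ‖φs x t‖ ^ 2 :=
      integral_add (((hIφ t ht).1.add ((hIφ t ht).2.1.const_mul 2)).sub
        ((hIφ t ht).2.2.2.const_mul (2 * σ ^ 2))) (hIφs t ht).1
    have e2 : ∫ x, (p t x * ‖φ x t‖ ^ 2 + 2 * (p t x * ⟪μ x t, φ x t⟫)
          - 2 * σ ^ 2 * ⟪φ x t, gradient (p t) x⟫)
        = (∫ x, (p t x * ‖φ x t‖ ^ 2 + 2 * (p t x * ⟪μ x t, φ x t⟫)))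
          - ∫ x, 2 * σ ^ 2 * ⟪φ x t, gradient (p t) x⟫ :=
      integral_sub ((hIφ t ht).1.add ((hIφ t ht).2.1.const_mul 2))
        ((hIφ t ht).2.2.2.const_mul (2 * σ ^ 2))
    have e3 : ∫ x, (p t x * ‖φ x t‖ ^ 2 + 2 * (p t x * ⟪μ x t, φ x t⟫))
        = (∫ x, p t x * ‖φ x t‖ ^ 2) + ∫ x, 2 * (p t x * ⟪μ x t, φ x t⟫) :=
      integral_add (hIφ t ht).1 ((hIφ t ht).2.1.const_mul 2)
    rw [integral_congr_ae (Filter.Eventually.of_forall (ptE t ht)), e1, e2, e3,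
      integral_const_mul, integral_const_mul]
  -- splitting of the cost-functional slice integral
  have hLgen : ∀ f ∈ ({φ, φs} :
      Set (EuclideanSpace ℝ (Fin D) → ℝ → EuclideanSpace ℝ (Fin D))),
      ∀ t ∈ Set.Icc (0:ℝ) 1,
      ∫ x, p t x * (‖f x t‖ ^ 2 + 2 * ⟪μ x t, f x t⟫
          + 2 * σ ^ 2 * divg (fun y => f y t) x)
        = (∫ x, p t x * ‖f x t‖ ^ 2) + 2 * (∫ x, p t x * ⟪μ x t, f x t⟫)
          + 2 * σ ^ 2 * (∫ x, p t x * divg (fun y => f y t) x) := by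
    intro f hf t ht
    obtain ⟨h1, h2, h3, h4⟩ := hInt f hf t ht
    have hre : (fun x => p t x * (‖f x t‖ ^ 2 + 2 * ⟪μ x t, f x t⟫
          + 2 * σ ^ 2 * divg (fun y => f y t) x))
        = fun x => p t x * ‖f x t‖ ^ 2 + 2 * (p t x * ⟪μ x t, f x t⟫)
          + 2 * σ ^ 2 * (p t x * divg (fun y => f y t) x) := by
      funext x; ring
    have e1 : ∫ x, (p t x * ‖f x t‖ ^ 2 + 2 * (p t x * ⟪μ x t, f x t⟫)
          + 2 * σ ^ 2 * (p t x * divg (fun y => f y t) x))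
        = (∫ x, (p t x * ‖f x t‖ ^ 2 + 2 * (p t x * ⟪μ x t, f x t⟫)))
          + ∫ x, 2 * σ ^ 2 * (p t x * divg (fun y => f y t) x) :=
      integral_add (h1.add (h2.const_mul 2)) (h3.const_mul (2 * σ ^ 2))
    have e2 : ∫ x, (p t x * ‖f x t‖ ^ 2 + 2 * (p t x * ⟪μ x t, f x t⟫))
        = (∫ x, p t x * ‖f x t‖ ^ 2) + ∫ x, 2 * (p t x * ⟪μ x t, f x t⟫) :=
      integral_add h1 (h2.const_mul 2)
    rw [hre, e1, e2, integral_const_mul, integral_const_mul]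
  -- consequence of the divergence identity
  have hdiv' : ∀ f ∈ ({φ, φs} :
      Set (EuclideanSpace ℝ (Fin D) → ℝ → EuclideanSpace ℝ (Fin D))),
      ∀ᵐ t ∂(volume.restrict (Set.Icc (0:ℝ) 1)),
        ∫ x, ⟪f x t, gradient (p t) x⟫
          = - ∫ x, p t x * divg (fun y => f y t) x := by
    intro f hf
    filter_upwards [hdiv f hf, ae_restrict_mem measurableSet_Icc] with t h0 ht
    obtain ⟨h1, h2, h3, h4⟩ := hInt f hf t ht
    have hsum : (∫ x, p t x * divg (fun y => f y t) x)
        + (∫ x, ⟪f x t, gradient (p t) x⟫) = 0 := by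
      rw [← integral_add h3 h4]; exact h0
    linarith
  -- a.e. identification of the squared-difference integral with `H`
  have hFH : ∀ᵐ t ∂(volume.restrict (Set.Icc (0:ℝ) 1)),
      ∫ x, p t x * ‖φ x t - φs x t‖ ^ 2
        = (∫ x, p t x * ‖φ x t‖ ^ 2) + 2 * (∫ x, p t x * ⟪μ x t, φ x t⟫)
          + 2 * σ ^ 2 * (∫ x, p t x * divg (fun y => φ y t) x)
          + ∫ x, p t x * ‖φs x t‖ ^ 2 := by
    filter_upwards [hdiv' φ hmemφ, ae_restrict_mem measurableSet_Icc] with t hd ht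
    rw [hEval t ht, hd]; ring
  -- a.e. value of the cost-functional slice for φ*
  have hLφs_ae : ∀ᵐ t ∂(volume.restrict (Set.Icc (0:ℝ) 1)),
      (∫ x, p t x * (‖φs x t‖ ^ 2 + 2 * ⟪μ x t, φs x t⟫
          + 2 * σ ^ 2 * divg (fun y => φs y t) x))
        = - ∫ x, p t x * ‖φs x t‖ ^ 2 := by
    filter_upwards [hdiv' φs hmemφs, ae_restrict_mem measurableSet_Icc] with t hd ht
    have hps : ∫ x, σ ^ 2 * ⟪φs x t, gradient (p t) x⟫
        = ∫ x, (p t x * ‖φs x t‖ ^ 2 + p t x * ⟪μ x t, φs x t⟫) :=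
      integral_congr_ae (Filter.Eventually.of_forall (ptS t ht))
    have e4 : ∫ x, (p t x * ‖φs x t‖ ^ 2 + p t x * ⟪μ x t, φs x t⟫)
        = (∫ x, p t x * ‖φs x t‖ ^ 2) + ∫ x, p t x * ⟪μ x t, φs x t⟫ :=
      integral_add (hIφs t ht).1 (hIφs t ht).2.1
    rw [integral_const_mul, e4] at hps
    rw [hLgen φs hmemφs t ht]
    linear_combination (-2 : ℝ) * hps + 2 * σ ^ 2 * hd
  -- define H; its integral over [0,1] vanishes
  have hHint : IntegrableOn (fun t =>
      (∫ x, p t x * ‖φ x t‖ ^ 2) + 2 * (∫ x, p t x * ⟪μ x t, φ x t⟫)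
        + 2 * σ ^ 2 * (∫ x, p t x * divg (fun y => φ y t) x)
        + ∫ x, p t x * ‖φs x t‖ ^ 2) (Set.Icc (0:ℝ) 1) :=
    ((hTφ.1.add (hTφ.2.1.const_mul 2)).add (hTφ.2.2.const_mul (2 * σ ^ 2))).add hTφs.1
  have hHzero : ∫ t in Set.Icc (0:ℝ) 1,
      ((∫ x, p t x * ‖φ x t‖ ^ 2) + 2 * (∫ x, p t x * ⟪μ x t, φ x t⟫)
        + 2 * σ ^ 2 * (∫ x, p t x * divg (fun y => φ y t) x)
        + ∫ x, p t x * ‖φs x t‖ ^ 2) = 0 := by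
    have hsplit : ∫ t in Set.Icc (0:ℝ) 1,
        ((∫ x, p t x * ‖φ x t‖ ^ 2) + 2 * (∫ x, p t x * ⟪μ x t, φ x t⟫)
          + 2 * σ ^ 2 * (∫ x, p t x * divg (fun y => φ y t) x)
          + ∫ x, p t x * ‖φs x t‖ ^ 2)
        = (∫ t in Set.Icc (0:ℝ) 1,
            ((∫ x, p t x * ‖φ x t‖ ^ 2) + 2 * (∫ x, p t x * ⟪μ x t, φ x t⟫)
              + 2 * σ ^ 2 * (∫ x, p t x * divg (fun y => φ y t) x)))
          + ∫ t in Set.Icc (0:ℝ) 1, ∫ x, p t x * ‖φs x t‖ ^ 2 :=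
      integral_add ((hTφ.1.add (hTφ.2.1.const_mul 2)).add
        (hTφ.2.2.const_mul (2 * σ ^ 2))) hTφs.1
    have hLφeq : ∫ t in Set.Icc (0:ℝ) 1,
        ((∫ x, p t x * ‖φ x t‖ ^ 2) + 2 * (∫ x, p t x * ⟪μ x t, φ x t⟫)
          + 2 * σ ^ 2 * (∫ x, p t x * divg (fun y => φ y t) x))
        = ∫ t in Set.Icc (0:ℝ) 1, ∫ x,
            p t x * (‖φ x t‖ ^ 2 + 2 * ⟪μ x t, φ x t⟫
              + 2 * σ ^ 2 * divg (fun y => φ y t) x) := by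
      refine integral_congr_ae ?_
      filter_upwards [ae_restrict_mem measurableSet_Icc] with t ht
      exact (hLgen φ hmemφ t ht).symm
    have hLφseq : ∫ t in Set.Icc (0:ℝ) 1, ∫ x,
          p t x * (‖φs x t‖ ^ 2 + 2 * ⟪μ x t, φs x t⟫
            + 2 * σ ^ 2 * divg (fun y => φs y t) x)
        = - ∫ t in Set.Icc (0:ℝ) 1, ∫ x, p t x * ‖φs x t‖ ^ 2 := by
      rw [integral_congr_ae hLφs_ae, integral_neg]
    rw [hsplit, hLφeq, hL, hLφseq]
    ring
  -- H vanishes a.e.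
  have hH0ae : ∀ᵐ t ∂(volume.restrict (Set.Icc (0:ℝ) 1)),
      ((∫ x, p t x * ‖φ x t‖ ^ 2) + 2 * (∫ x, p t x * ⟪μ x t, φ x t⟫)
        + 2 * σ ^ 2 * (∫ x, p t x * divg (fun y => φ y t) x)
        + ∫ x, p t x * ‖φs x t‖ ^ 2) = 0 := by
    have hnn : 0 ≤ᵐ[volume.restrict (Set.Icc (0:ℝ) 1)] fun t =>
        ((∫ x, p t x * ‖φ x t‖ ^ 2) + 2 * (∫ x, p t x * ⟪μ x t, φ x t⟫)
          + 2 * σ ^ 2 * (∫ x, p t x * divg (fun y => φ y t) x)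
          + ∫ x, p t x * ‖φs x t‖ ^ 2) := by
      filter_upwards [hFH, ae_restrict_mem measurableSet_Icc] with t hF ht
      rw [← hF]
      exact integral_nonneg fun x => mul_nonneg (hp_pos t ht x).le (by positivity)
    have := (integral_eq_zero_iff_of_nonneg_ae hnn hHint).mp hHzero
    filter_upwards [this] with t h using h
  -- the slice statement: for a.e. t, φ(·,t) = φ*(·,t) everywhere
  have hslice : ∀ᵐ t ∂(volume.restrict (Set.Icc (0:ℝ) 1)),
      ∀ x, φ x t = φs x t := by
    filter_upwards [hFH, hH0ae, ae_restrict_mem measurableSet_Icc] with t hF hH ht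
    have hF0 : ∫ x, p t x * ‖φ x t - φs x t‖ ^ 2 = 0 := by rw [hF, hH]
    have hnn : 0 ≤ᵐ[(volume : Measure (EuclideanSpace ℝ (Fin D)))]
        fun x => p t x * ‖φ x t - φs x t‖ ^ 2 :=
      Filter.Eventually.of_forall fun x =>
        mul_nonneg (hp_pos t ht x).le (by positivity)
    have h0 := (integral_eq_zero_iff_of_nonneg_ae hnn (hIntE t ht)).mp hF0
    have heq : (fun x => φ x t) =ᵐ[(volume : Measure (EuclideanSpace ℝ (Fin D)))]
        fun x => φs x t := by
      filter_upwards [h0] with x hx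
      have hp0 : p t x ≠ 0 := (hp_pos t ht x).ne'
      have hsq : ‖φ x t - φs x t‖ ^ 2 = 0 := by
        have hx' : p t x * ‖φ x t - φs x t‖ ^ 2 = 0 := hx
        rcases mul_eq_zero.mp hx' with h | h
        · exact absurd h hp0
        · exact h
      have : φ x t - φs x t = 0 := by
        rw [← norm_eq_zero]
        exact pow_eq_zero_iff (by norm_num) |>.mp hsq
      exact sub_eq_zero.mp this
    -- upgrade to everywhere by continuity
    have hcφ : Continuous fun x => φ x t := by
      have := hφ_diff.continuousOn
      exact this.comp_continuous (continuous_id.prodMk continuous_const)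
        (fun x => Set.mem_prod.mpr ⟨Set.mem_univ _, ht⟩)
    have hgradcont : Continuous fun x => gradient (p t) x := by
      have hfd := (hp_diff t ht).continuous_fderiv one_ne_zero
      exact ((InnerProductSpace.toDual ℝ
        (EuclideanSpace ℝ (Fin D))).symm.continuous.comp hfd)
    have hcφs : Continuous fun x => φs x t := by
      have hrep : (fun x => φs x t)
          = fun x => -μ x t + σ ^ 2 • ((p t x)⁻¹ • gradient (p t) x) := by
        funext x
        rw [hφs, grad_log_aux (((hp_diff t ht).differentiable one_ne_zero) x)
          (hp_pos t ht x).ne']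
      rw [hrep]
      have hμcont : Continuous fun x => μ x t :=
        hμ_cont.comp (continuous_id.prodMk continuous_const)
      have hinv : Continuous fun x => (p t x)⁻¹ :=
        ((hp_diff t ht).continuous).inv₀ fun x => (hp_pos t ht x).ne'
      exact hμcont.neg.add ((hinv.smul hgradcont).const_smul (σ ^ 2))
    have := (Continuous.ae_eq_iff_eq volume hcφ hcφs).mp heq
    exact fun x => congrFun this x
  -- pass to the product measure
  rw [ae_iff] at hslice ⊢
  obtain ⟨B, hsub, hBm, hB0⟩ := exists_measurable_superset_of_null hslice
  have hsubset : {q : EuclideanSpace ℝ (Fin D) × ℝ | ¬ φ q.1 q.2 = φs q.1 q.2}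
      ⊆ Prod.snd ⁻¹' B := fun q hq => hsub (fun h => hq (h q.1))
  refine measure_mono_null hsubset ?_
  rw [Measure.prod_apply (measurable_snd hBm)]
  rw [Measure.restrict_apply hBm] at hB0
  simp [Set.preimage_preimage, hB0]
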